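/- arXiv:2007.05375 — 4 statements merged into one kernel-verified Lean document; each statement's English description precedes it below -/
import Mathlib

section
/- Let O be the octonions and f : O → O a real-linear map. If Re(f(px) - p·f(x)) = 0 for all p, x in O, then f(x) = f₀(x) - Σ_{i=1}^{7} e_i f₀(e_i x), where f₀(x) := Re(f(x)) and e_1,…,e_7 is the standard imaginary unit basis of O. -/
noncomputable section

open scoped Quaternion

/-- The octonions, built from pairs of quaternions via the Cayley–Dickson construction. -/
def Octonion : Type := ℍ[ℝ] × ℍ[ℝ]

namespace Octonion

def mk' (a b : ℍ[ℝ]) : Octonion := Prod.mk a b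
def q1 (x : Octonion) : ℍ[ℝ] := Prod.fst x
def q2 (x : Octonion) : ℍ[ℝ] := Prod.snd x

instance : AddCommGroup Octonion := inferInstanceAs (AddCommGroup (ℍ[ℝ] × ℍ[ℝ]))
instance : Module ℝ Octonion := inferInstanceAs (Module ℝ (ℍ[ℝ] × ℍ[ℝ]))
instance : One Octonion := ⟨mk' 1 0⟩
instance : Mul Octonion :=
  ⟨fun x y => mk' (q1 x * q1 y - star (q2 y) * q2 x) (q2 y * q1 x + q2 x * star (q1 y))⟩

/-- Octonion conjugation. -/
def conj (x : Octonion) : Octonion := mk' (star (q1 x)) (-(q2 x))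

/-- The real part of an octonion. -/
def re (x : Octonion) : ℝ := (q1 x).re

/-- The standard basis `e 0 = 1, e 1, …, e 7` of the octonions. -/
def e : Fin 8 → Octonion :=
  ![mk' 1 0, mk' ⟨0,1,0,0⟩ 0, mk' ⟨0,0,1,0⟩ 0, mk' ⟨0,0,0,1⟩ 0,
    mk' 0 1, mk' 0 ⟨0,1,0,0⟩, mk' 0 ⟨0,0,1,0⟩, mk' 0 ⟨0,0,0,1⟩]

/-- The coordinates of an octonion with respect to the standard basis. -/
def coord (x : Octonion) : Fin 8 → ℝ :=
  ![(q1 x).re, (q1 x).imI, (q1 x).imJ, (q1 x).imK,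
    (q2 x).re, (q2 x).imI, (q2 x).imJ, (q2 x).imK]

end Octonion

namespace Octonion

lemma re_sub (a b : Octonion) : re (a - b) = re a - re b := rfl

lemma mk'_mul_mk' (a b c d : ℍ[ℝ]) :
    mk' a b * mk' c d = mk' (a * c - star d * b) (d * a + b * star c) := rfl
lemma re_mk' (a b : ℍ[ℝ]) : re (mk' a b) = a.re := rfl
lemma smul_mk' (r : ℝ) (a b : ℍ[ℝ]) : r • mk' a b = mk' (r • a) (r • b) := rfl
lemma add_mk' (a b c d : ℍ[ℝ]) : mk' a b + mk' c d = mk' (a + c) (b + d) := rfl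
lemma sub_mk' (a b c d : ℍ[ℝ]) : mk' a b - mk' c d = mk' (a - c) (b - d) := rfl
lemma one_def : (1 : Octonion) = mk' 1 0 := rfl
lemma mk'_inj {a b c d : ℍ[ℝ]} : mk' a b = mk' c d ↔ a = c ∧ b = d :=
  Prod.mk.injEq a b c d ▸ Iff.rfl
def qi : ℍ[ℝ] := ⟨0,1,0,0⟩
def qj : ℍ[ℝ] := ⟨0,0,1,0⟩
def qk : ℍ[ℝ] := ⟨0,0,0,1⟩
@[simp] lemma qi_re : qi.re = 0 := rfl
@[simp] lemma qi_imI : qi.imI = 1 := rfl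
@[simp] lemma qi_imJ : qi.imJ = 0 := rfl
@[simp] lemma qi_imK : qi.imK = 0 := rfl
@[simp] lemma qj_re : qj.re = 0 := rfl
@[simp] lemma qj_imI : qj.imI = 0 := rfl
@[simp] lemma qj_imJ : qj.imJ = 1 := rfl
@[simp] lemma qj_imK : qj.imK = 0 := rfl
@[simp] lemma qk_re : qk.re = 0 := rfl
@[simp] lemma qk_imI : qk.imI = 0 := rfl
@[simp] lemma qk_imJ : qk.imJ = 0 := rfl
@[simp] lemma qk_imK : qk.imK = 1 := rfl
lemma he0 : e (0:Fin 7).succ = mk' qi 0 := rfl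
lemma he1 : e (1:Fin 7).succ = mk' qj 0 := rfl
lemma he2 : e (2:Fin 7).succ = mk' qk 0 := rfl
lemma he3 : e (3:Fin 7).succ = mk' 0 1 := rfl
lemma he4 : e (4:Fin 7).succ = mk' 0 qi := rfl
lemma he5 : e (5:Fin 7).succ = mk' 0 qj := rfl
lemma he6 : e (6:Fin 7).succ = mk' 0 qk := rfl

lemma key (y : Octonion) :
    y = re y • (1 : Octonion) - ∑ i : Fin 7, re (e i.succ * y) • e i.succ := by
  obtain ⟨y1, y2⟩ := y
  have hy : (⟨y1, y2⟩ : Octonion) = mk' y1 y2 := rfl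
  rw [hy, Fin.sum_univ_seven, he0, he1, he2, he3, he4, he5, he6,
    mk'_mul_mk', mk'_mul_mk', mk'_mul_mk', mk'_mul_mk', mk'_mul_mk', mk'_mul_mk', mk'_mul_mk',
    one_def]
  simp only [re_mk', smul_mk']
  simp only [add_mk', sub_mk']
  refine mk'_inj.2 ⟨?_, ?_⟩ <;> ext <;> simp <;> ring

end Octonion

open Octonion in
/-- If an `ℝ`-linear map `f : 𝕆 → 𝕆` satisfies `Re (f (p x) - p f x) = 0` for all
`p, x`, then `f x = f₀(x) - ∑ᵢ eᵢ f₀(eᵢ x)` where `f₀ = Re ∘ f`. -/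
theorem octonion_almost_linear_real_part_formula
    (f : Octonion →ₗ[ℝ] Octonion)
    (h : ∀ p x : Octonion, re (f (p * x) - p * f x) = 0) :
    ∀ x : Octonion,
      f x = re (f x) • (1 : Octonion)
        - ∑ i : Fin 7, re (f (e i.succ * x)) • e i.succ := by
  intro x
  have hre : ∀ i : Fin 7, re (f (e i.succ * x)) = re (e i.succ * f x) := by
    intro i
    have := h (e i.succ) x
    rw [re_sub] at this
    linarith
  simp only [hre]
  exact key (f x)
end
end

section
/- Let O be the octonions and f : O → O a real-linear map. Then Re(f(px) - p f(x)) = 0 for all p, x ∈ O if and only if there exists q ∈ O such that f(x) = x q for all x ∈ O. -/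
noncomputable section

open scoped Quaternion

namespace OctAux

open Octonion

lemma mul_def (x y : Octonion) :
    x * y = mk' (q1 x * q1 y - star (q2 y) * q2 x) (q2 y * q1 x + q2 x * star (q1 y)) := rfl

lemma q1_mk (a b : ℍ[ℝ]) : q1 (mk' a b) = a := rfl
lemma q2_mk (a b : ℍ[ℝ]) : q2 (mk' a b) = b := rfl

lemma q1_sub (x y : Octonion) : q1 (x - y) = q1 x - q1 y := rfl
lemma q1_one : q1 (1 : Octonion) = 1 := rfl
lemma q2_one : q2 (1 : Octonion) = 0 := rfl
lemma q1_zero : q1 (0 : Octonion) = 0 := rfl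
lemma q2_zero : q2 (0 : Octonion) = 0 := rfl

lemma re_sub (x y : Octonion) : re (x - y) = re x - re y := by
  simp [re, q1_sub]

lemma mul_one' (x : Octonion) : x * 1 = x := by
  rw [mul_def, q1_one, q2_one]
  show (Prod.mk _ _ : ℍ[ℝ] × ℍ[ℝ]) = x
  ext <;> simp [q1, q2]

lemma ext' (x y : Octonion) (h1 : q1 x = q1 y) (h2 : q2 x = q2 y) : x = y :=
  Prod.ext h1 h2

lemma q2_sub (x y : Octonion) : q2 (x - y) = q2 x - q2 y := rfl

lemma mul_sub' (p a b : Octonion) : p * (a - b) = p * a - p * b := by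
  refine ext' _ _ ?_ ?_ <;>
    simp only [mul_def, q1_sub, q2_sub, q1_mk, q2_mk, mul_sub, sub_mul, star_sub] <;>
    abel

lemma re_mul_assoc (a b c : Octonion) : re ((a * b) * c) = re (a * (b * c)) := by
  simp only [re, mul_def, q1_mk, q2_mk]
  simp only [Quaternion.re_sub, Quaternion.re_add, Quaternion.re_mul, Quaternion.imI_sub,
    Quaternion.imI_add, Quaternion.imI_mul, Quaternion.imJ_sub, Quaternion.imJ_add,
    Quaternion.imJ_mul, Quaternion.imK_sub, Quaternion.imK_add, Quaternion.imK_mul,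
    Quaternion.re_star, Quaternion.imI_star, Quaternion.imJ_star, Quaternion.imK_star]
  ring

lemma re_conj_mul_self (x : Octonion) :
    re (conj x * x) =
      (q1 x).re ^ 2 + (q1 x).imI ^ 2 + (q1 x).imJ ^ 2 + (q1 x).imK ^ 2 +
      (q2 x).re ^ 2 + (q2 x).imI ^ 2 + (q2 x).imJ ^ 2 + (q2 x).imK ^ 2 := by
  rw [mul_def, conj]
  simp only [q1_mk, q2_mk, re]
  simp only [Quaternion.re_sub, Quaternion.re_mul, Quaternion.re_star, Quaternion.imI_star,
    Quaternion.imJ_star, Quaternion.imK_star, Quaternion.re_neg, Quaternion.imI_neg,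
    Quaternion.imJ_neg, Quaternion.imK_neg]
  ring

lemma eq_zero_of_forall_re_mul (y : Octonion) (h : ∀ p : Octonion, re (p * y) = 0) :
    y = 0 := by
  have h1 := h (conj y)
  rw [re_conj_mul_self] at h1
  refine ext' _ _ ?_ ?_
  · rw [q1_zero]; ext <;> simp only [Quaternion.re_zero, Quaternion.imI_zero, Quaternion.imJ_zero, Quaternion.imK_zero] <;> nlinarith [sq_nonneg (q1 y).re, sq_nonneg (q1 y).imI,
      sq_nonneg (q1 y).imJ, sq_nonneg (q1 y).imK, sq_nonneg (q2 y).re, sq_nonneg (q2 y).imI,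
      sq_nonneg (q2 y).imJ, sq_nonneg (q2 y).imK]
  · rw [q2_zero]; ext <;> simp only [Quaternion.re_zero, Quaternion.imI_zero, Quaternion.imJ_zero, Quaternion.imK_zero] <;> nlinarith [sq_nonneg (q1 y).re, sq_nonneg (q1 y).imI,
      sq_nonneg (q1 y).imJ, sq_nonneg (q1 y).imK, sq_nonneg (q2 y).re, sq_nonneg (q2 y).imI,
      sq_nonneg (q2 y).imJ, sq_nonneg (q2 y).imK]

end OctAux

open Octonion in
/-- An `ℝ`-linear map `f : 𝕆 → 𝕆` satisfies `Re (f (p x) - p f x) = 0` for all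
`p, x` if and only if it is right multiplication by some octonion `q`. -/
theorem octonion_almost_linear_iff_right_mul
    (f : Octonion →ₗ[ℝ] Octonion) :
    (∀ p x : Octonion, re (f (p * x) - p * f x) = 0)
      ↔ ∃ q : Octonion, ∀ x : Octonion, f x = x * q := by
  constructor
  · intro h
    refine ⟨f 1, fun x => ?_⟩
    have key : ∀ p x : Octonion, re (f (p * x)) = re (p * f x) := by
      intro p x
      have := h p x
      rw [OctAux.re_sub] at this
      linarith
    have hfp : ∀ p : Octonion, re (f p) = re (p * f 1) := by
      intro p
      have := key p 1
      rwa [OctAux.mul_one'] at this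
    have : f x - x * f 1 = 0 := by
      apply OctAux.eq_zero_of_forall_re_mul
      intro p
      have e1 : re (p * (f x - x * f 1)) = re (p * f x) - re (p * (x * f 1)) := by
        rw [OctAux.mul_sub', OctAux.re_sub]
      rw [e1, ← key p x, hfp (p * x), OctAux.re_mul_assoc]
      ring
    have := sub_eq_zero.mp this
    exact this
  · rintro ⟨q, hq⟩ p x
    rw [hq, hq, OctAux.re_sub, OctAux.re_mul_assoc]
    ring
end
end

section
/- Let f : O → O be a real-linear map on the octonions satisfying f(xq) = q f(x) for all q, x ∈ O. Then f = 0. -/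
noncomputable section

open scoped Quaternion

namespace Octonion

@[simp] lemma q1_mul (x y : Octonion) : q1 (x * y) = q1 x * q1 y - star (q2 y) * q2 x := rfl
@[simp] lemma q2_mul (x y : Octonion) : q2 (x * y) = q2 y * q1 x + q2 x * star (q1 y) := rfl
@[simp] lemma q1_mk (a b : ℍ[ℝ]) : q1 (mk' a b) = a := rfl
@[simp] lemma q2_mk (a b : ℍ[ℝ]) : q2 (mk' a b) = b := rfl
@[simp] lemma q1_one : q1 1 = 1 := rfl
@[simp] lemma q2_one : q2 1 = 0 := rfl
@[simp] lemma q1_zero : q1 0 = 0 := rfl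
@[simp] lemma q2_zero : q2 0 = 0 := rfl

lemma ext_iff' (x y : Octonion) : x = y ↔ q1 x = q1 y ∧ q2 x = q2 y := Prod.ext_iff

lemma one_mul' (y : Octonion) : (1 : Octonion) * y = y := by
  rw [ext_iff']; simp

lemma mul_zero' (x : Octonion) : x * (0 : Octonion) = 0 := by
  rw [ext_iff']; simp

end Octonion

/-- A well-typed constructor for real quaternions. -/
def qmk (a b c d : ℝ) : ℍ[ℝ] := ⟨a, b, c, d⟩
@[simp] lemma qmk_re (a b c d : ℝ) : (qmk a b c d).re = a := rfl
@[simp] lemma qmk_imI (a b c d : ℝ) : (qmk a b c d).imI = b := rfl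
@[simp] lemma qmk_imJ (a b c d : ℝ) : (qmk a b c d).imJ = c := rfl
@[simp] lemma qmk_imK (a b c d : ℝ) : (qmk a b c d).imK = d := rfl

set_option maxHeartbeats 1000000 in
open Octonion in
/-- An `ℝ`-linear map `f : 𝕆 → 𝕆` with `f (x q) = q f(x)` for all `q, x` is zero. -/
theorem octonion_twisted_right_equivariant_map_eq_zero
    (f : Octonion →ₗ[ℝ] Octonion)
    (h : ∀ q x : Octonion, f (x * q) = q * f x) :
    f = 0 := by
  have hf : ∀ q : Octonion, f q = q * f 1 := by
    intro q
    have := h q 1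
    rwa [Octonion.one_mul'] at this
  have key : ∀ q x : Octonion, (x * q) * f 1 = q * (x * f 1) := by
    intro q x
    rw [← hf, ← hf, h]
  have hzero : f 1 = 0 := by
    generalize hC : f 1 = c at key
    obtain ⟨⟨a0,a1,a2,a3⟩,⟨b0,b1,b2,b3⟩⟩ := c
    have e1 := key (mk' (qmk 0 1 0 0) 0) (mk' (qmk 0 0 1 0) 0)
    have e2 := key (mk' (qmk 0 1 0 0) 0) (mk' 0 1)
    have e3 := key (mk' (qmk 0 0 1 0) 0) (mk' 0 1)
    have e4 := key (mk' (qmk 0 0 0 1) 0) (mk' 0 1)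
    have p1 : ∀ a b : ℍ[ℝ], Octonion.q1 (Prod.mk a b : Octonion) = a := fun _ _ => rfl
    have p2 : ∀ a b : ℍ[ℝ], Octonion.q2 (Prod.mk a b : Octonion) = b := fun _ _ => rfl
    rw [show ((⟨a0,a1,a2,a3⟩, ⟨b0,b1,b2,b3⟩) : Octonion) = mk' (qmk a0 a1 a2 a3) (qmk b0 b1 b2 b3) from rfl] at e1 e2 e3 e4
    rw [Octonion.ext_iff'] at e1 e2 e3 e4
    simp [p1, p2, Quaternion.ext_iff,
      Quaternion.re_mul, Quaternion.imI_mul, Quaternion.imJ_mul, Quaternion.imK_mul] at e1 e2 e3 e4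
    obtain ⟨a3e, a2e, a1e, a0e⟩ := e1
    obtain ⟨⟨b1e, b0e⟩, -⟩ := e2
    obtain ⟨⟨b2e, -⟩, -⟩ := e3
    obtain ⟨⟨b3e, -⟩, -⟩ := e4
    clear key hC hf h
    have : a0 = 0 := by linarith
    have : a1 = 0 := by linarith
    have : a2 = 0 := by linarith
    have : a3 = 0 := by linarith
    have : b0 = 0 := by linarith
    have : b1 = 0 := by linarith
    have : b2 = 0 := by linarith
    have : b3 = 0 := by linarith
    subst_vars
    rfl
  ext x
  rw [hf x, hzero, Octonion.mul_zero']
  rfl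
end
end

section
/- Let M be a left O-module over the octonions. For any m ∈ M, the left submodule generated by m has real dimension at most 128. -/
noncomputable section

open scoped Quaternion

namespace OctoAux
open Octonion

lemma mul_def (x y : Octonion) :
    x * y = mk' (q1 x * q1 y - star (q2 y) * q2 x) (q2 y * q1 x + q2 x * star (q1 y)) := rfl

lemma mk'_mul_mk' (a b c d : ℍ[ℝ]) :
    mk' a b * mk' c d = mk' (a * c - star d * b) (d * a + b * star c) := rfl

lemma mk'_add_mk' (a b c d : ℍ[ℝ]) : mk' a b + mk' c d = mk' (a + c) (b + d) := rfl

lemma mk'_ext {a b c d : ℍ[ℝ]} (h1 : a = c) (h2 : b = d) : mk' a b = mk' c d := by rw [h1, h2]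

lemma octo_neg_one_def : (-1 : Octonion) = mk' (-1) 0 := by
  show -((1 : ℍ[ℝ]), (0 : ℍ[ℝ])) = ((-1 : ℍ[ℝ]), (0 : ℍ[ℝ]))
  rw [Prod.neg_mk, neg_zero]

lemma q1_add (x y : Octonion) : q1 (x + y) = q1 x + q1 y := rfl
lemma q2_add (x y : Octonion) : q2 (x + y) = q2 x + q2 y := rfl
lemma q1_smul (c : ℝ) (x : Octonion) : q1 (c • x) = c • q1 x := rfl
lemma q2_smul (c : ℝ) (x : Octonion) : q2 (c • x) = c • q2 x := rfl
lemma q1_mk (a b : ℍ[ℝ]) : q1 (mk' a b) = a := rfl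
lemma q2_mk (a b : ℍ[ℝ]) : q2 (mk' a b) = b := rfl
lemma octo_ext {x y : Octonion} (h1 : q1 x = q1 y) (h2 : q2 x = q2 y) : x = y :=
  Prod.ext h1 h2

def qmk (a b c d : ℝ) : ℍ[ℝ] := ⟨a, b, c, d⟩
@[simp] lemma qmk_re (a b c d : ℝ) : (qmk a b c d).re = a := rfl
@[simp] lemma qmk_imI (a b c d : ℝ) : (qmk a b c d).imI = b := rfl
@[simp] lemma qmk_imJ (a b c d : ℝ) : (qmk a b c d).imJ = c := rfl
@[simp] lemma qmk_imK (a b c d : ℝ) : (qmk a b c d).imK = d := rfl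

lemma e0v : e 0 = (1 : Octonion) := rfl

lemma e1v : e 1 = mk' (qmk 0 1 0 0) 0 := rfl

lemma e2v : e 2 = mk' (qmk 0 0 1 0) 0 := rfl

lemma e3v : e 3 = mk' (qmk 0 0 0 1) 0 := rfl

lemma e4v : e 4 = mk' 0 1 := rfl

lemma e5v : e 5 = mk' 0 (qmk 0 1 0 0) := rfl

lemma e6v : e 6 = mk' 0 (qmk 0 0 1 0) := rfl

lemma e7v : e 7 = mk' 0 (qmk 0 0 0 1) := rfl

lemma sq1 : e 1 * e 1 = -1 := by
  rw [e1v, mk'_mul_mk', octo_neg_one_def]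
  exact mk'_ext (by ext <;> simp) (by ext <;> simp)

lemma sq2 : e 2 * e 2 = -1 := by
  rw [e2v, mk'_mul_mk', octo_neg_one_def]
  exact mk'_ext (by ext <;> simp) (by ext <;> simp)

lemma sq3 : e 3 * e 3 = -1 := by
  rw [e3v, mk'_mul_mk', octo_neg_one_def]
  exact mk'_ext (by ext <;> simp) (by ext <;> simp)

lemma sq4 : e 4 * e 4 = -1 := by
  rw [e4v, mk'_mul_mk', octo_neg_one_def]
  exact mk'_ext (by ext <;> simp) (by ext <;> simp)

lemma sq5 : e 5 * e 5 = -1 := by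
  rw [e5v, mk'_mul_mk', octo_neg_one_def]
  exact mk'_ext (by ext <;> simp) (by ext <;> simp)

lemma sq6 : e 6 * e 6 = -1 := by
  rw [e6v, mk'_mul_mk', octo_neg_one_def]
  exact mk'_ext (by ext <;> simp) (by ext <;> simp)

lemma sq7 : e 7 * e 7 = -1 := by
  rw [e7v, mk'_mul_mk', octo_neg_one_def]
  exact mk'_ext (by ext <;> simp) (by ext <;> simp)

lemma anti12 : e 1 * e 2 + e 2 * e 1 = 0 := by
  rw [e1v, e2v, mk'_mul_mk', mk'_mul_mk']
  show Prod.mk _ _ + Prod.mk _ _ = _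
  refine (mk'_add_mk' _ _ _ _).trans ?_
  show mk' _ _ = mk' 0 0
  exact mk'_ext (by ext <;> simp) (by ext <;> simp)

lemma anti13 : e 1 * e 3 + e 3 * e 1 = 0 := by
  rw [e1v, e3v, mk'_mul_mk', mk'_mul_mk']
  show Prod.mk _ _ + Prod.mk _ _ = _
  refine (mk'_add_mk' _ _ _ _).trans ?_
  show mk' _ _ = mk' 0 0
  exact mk'_ext (by ext <;> simp) (by ext <;> simp)

lemma anti14 : e 1 * e 4 + e 4 * e 1 = 0 := by
  rw [e1v, e4v, mk'_mul_mk', mk'_mul_mk']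
  show Prod.mk _ _ + Prod.mk _ _ = _
  refine (mk'_add_mk' _ _ _ _).trans ?_
  show mk' _ _ = mk' 0 0
  exact mk'_ext (by ext <;> simp) (by ext <;> simp)

lemma anti15 : e 1 * e 5 + e 5 * e 1 = 0 := by
  rw [e1v, e5v, mk'_mul_mk', mk'_mul_mk']
  show Prod.mk _ _ + Prod.mk _ _ = _
  refine (mk'_add_mk' _ _ _ _).trans ?_
  show mk' _ _ = mk' 0 0
  exact mk'_ext (by ext <;> simp) (by ext <;> simp)

lemma anti16 : e 1 * e 6 + e 6 * e 1 = 0 := by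
  rw [e1v, e6v, mk'_mul_mk', mk'_mul_mk']
  show Prod.mk _ _ + Prod.mk _ _ = _
  refine (mk'_add_mk' _ _ _ _).trans ?_
  show mk' _ _ = mk' 0 0
  exact mk'_ext (by ext <;> simp) (by ext <;> simp)

lemma anti17 : e 1 * e 7 + e 7 * e 1 = 0 := by
  rw [e1v, e7v, mk'_mul_mk', mk'_mul_mk']
  show Prod.mk _ _ + Prod.mk _ _ = _
  refine (mk'_add_mk' _ _ _ _).trans ?_
  show mk' _ _ = mk' 0 0
  exact mk'_ext (by ext <;> simp) (by ext <;> simp)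

lemma anti23 : e 2 * e 3 + e 3 * e 2 = 0 := by
  rw [e2v, e3v, mk'_mul_mk', mk'_mul_mk']
  show Prod.mk _ _ + Prod.mk _ _ = _
  refine (mk'_add_mk' _ _ _ _).trans ?_
  show mk' _ _ = mk' 0 0
  exact mk'_ext (by ext <;> simp) (by ext <;> simp)

lemma anti24 : e 2 * e 4 + e 4 * e 2 = 0 := by
  rw [e2v, e4v, mk'_mul_mk', mk'_mul_mk']
  show Prod.mk _ _ + Prod.mk _ _ = _
  refine (mk'_add_mk' _ _ _ _).trans ?_
  show mk' _ _ = mk' 0 0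
  exact mk'_ext (by ext <;> simp) (by ext <;> simp)

lemma anti25 : e 2 * e 5 + e 5 * e 2 = 0 := by
  rw [e2v, e5v, mk'_mul_mk', mk'_mul_mk']
  show Prod.mk _ _ + Prod.mk _ _ = _
  refine (mk'_add_mk' _ _ _ _).trans ?_
  show mk' _ _ = mk' 0 0
  exact mk'_ext (by ext <;> simp) (by ext <;> simp)

lemma anti26 : e 2 * e 6 + e 6 * e 2 = 0 := by
  rw [e2v, e6v, mk'_mul_mk', mk'_mul_mk']
  show Prod.mk _ _ + Prod.mk _ _ = _
  refine (mk'_add_mk' _ _ _ _).trans ?_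
  show mk' _ _ = mk' 0 0
  exact mk'_ext (by ext <;> simp) (by ext <;> simp)

lemma anti27 : e 2 * e 7 + e 7 * e 2 = 0 := by
  rw [e2v, e7v, mk'_mul_mk', mk'_mul_mk']
  show Prod.mk _ _ + Prod.mk _ _ = _
  refine (mk'_add_mk' _ _ _ _).trans ?_
  show mk' _ _ = mk' 0 0
  exact mk'_ext (by ext <;> simp) (by ext <;> simp)

lemma anti34 : e 3 * e 4 + e 4 * e 3 = 0 := by
  rw [e3v, e4v, mk'_mul_mk', mk'_mul_mk']
  show Prod.mk _ _ + Prod.mk _ _ = _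
  refine (mk'_add_mk' _ _ _ _).trans ?_
  show mk' _ _ = mk' 0 0
  exact mk'_ext (by ext <;> simp) (by ext <;> simp)

lemma anti35 : e 3 * e 5 + e 5 * e 3 = 0 := by
  rw [e3v, e5v, mk'_mul_mk', mk'_mul_mk']
  show Prod.mk _ _ + Prod.mk _ _ = _
  refine (mk'_add_mk' _ _ _ _).trans ?_
  show mk' _ _ = mk' 0 0
  exact mk'_ext (by ext <;> simp) (by ext <;> simp)

lemma anti36 : e 3 * e 6 + e 6 * e 3 = 0 := by
  rw [e3v, e6v, mk'_mul_mk', mk'_mul_mk']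
  show Prod.mk _ _ + Prod.mk _ _ = _
  refine (mk'_add_mk' _ _ _ _).trans ?_
  show mk' _ _ = mk' 0 0
  exact mk'_ext (by ext <;> simp) (by ext <;> simp)

lemma anti37 : e 3 * e 7 + e 7 * e 3 = 0 := by
  rw [e3v, e7v, mk'_mul_mk', mk'_mul_mk']
  show Prod.mk _ _ + Prod.mk _ _ = _
  refine (mk'_add_mk' _ _ _ _).trans ?_
  show mk' _ _ = mk' 0 0
  exact mk'_ext (by ext <;> simp) (by ext <;> simp)

lemma anti45 : e 4 * e 5 + e 5 * e 4 = 0 := by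
  rw [e4v, e5v, mk'_mul_mk', mk'_mul_mk']
  show Prod.mk _ _ + Prod.mk _ _ = _
  refine (mk'_add_mk' _ _ _ _).trans ?_
  show mk' _ _ = mk' 0 0
  exact mk'_ext (by ext <;> simp) (by ext <;> simp)

lemma anti46 : e 4 * e 6 + e 6 * e 4 = 0 := by
  rw [e4v, e6v, mk'_mul_mk', mk'_mul_mk']
  show Prod.mk _ _ + Prod.mk _ _ = _
  refine (mk'_add_mk' _ _ _ _).trans ?_
  show mk' _ _ = mk' 0 0
  exact mk'_ext (by ext <;> simp) (by ext <;> simp)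

lemma anti47 : e 4 * e 7 + e 7 * e 4 = 0 := by
  rw [e4v, e7v, mk'_mul_mk', mk'_mul_mk']
  show Prod.mk _ _ + Prod.mk _ _ = _
  refine (mk'_add_mk' _ _ _ _).trans ?_
  show mk' _ _ = mk' 0 0
  exact mk'_ext (by ext <;> simp) (by ext <;> simp)

lemma anti56 : e 5 * e 6 + e 6 * e 5 = 0 := by
  rw [e5v, e6v, mk'_mul_mk', mk'_mul_mk']
  show Prod.mk _ _ + Prod.mk _ _ = _
  refine (mk'_add_mk' _ _ _ _).trans ?_
  show mk' _ _ = mk' 0 0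
  exact mk'_ext (by ext <;> simp) (by ext <;> simp)

lemma anti57 : e 5 * e 7 + e 7 * e 5 = 0 := by
  rw [e5v, e7v, mk'_mul_mk', mk'_mul_mk']
  show Prod.mk _ _ + Prod.mk _ _ = _
  refine (mk'_add_mk' _ _ _ _).trans ?_
  show mk' _ _ = mk' 0 0
  exact mk'_ext (by ext <;> simp) (by ext <;> simp)

lemma anti67 : e 6 * e 7 + e 7 * e 6 = 0 := by
  rw [e6v, e7v, mk'_mul_mk', mk'_mul_mk']
  show Prod.mk _ _ + Prod.mk _ _ = _
  refine (mk'_add_mk' _ _ _ _).trans ?_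
  show mk' _ _ = mk' 0 0
  exact mk'_ext (by ext <;> simp) (by ext <;> simp)

lemma octo_add_mul (x y z : Octonion) : (x + y) * z = x * z + y * z := by
  rw [mul_def, mul_def, mul_def, q1_add, q2_add]
  show _ = Prod.mk _ _ + Prod.mk _ _
  refine Eq.trans ?_ (mk'_add_mk' _ _ _ _).symm
  exact mk'_ext (by noncomm_ring) (by noncomm_ring)

lemma octo_mul_add (x y z : Octonion) : x * (y + z) = x * y + x * z := by
  rw [mul_def, mul_def, mul_def, q1_add, q2_add]
  show _ = Prod.mk _ _ + Prod.mk _ _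
  refine Eq.trans ?_ (mk'_add_mk' _ _ _ _).symm
  refine mk'_ext ?_ ?_
  · show q1 x * (q1 y + q1 z) - star (q2 y + q2 z) * q2 x = _
    rw [star_add]; noncomm_ring
  · show (q2 y + q2 z) * q1 x + q2 x * star (q1 y + q1 z) = _
    rw [star_add]; noncomm_ring

lemma Esq (i : Fin 7) : e i.succ * e i.succ = -1 := by
  match i with
  | 0 => exact sq1
  | 1 => exact sq2
  | 2 => exact sq3
  | 3 => exact sq4
  | 4 => exact sq5
  | 5 => exact sq6
  | 6 => exact sq7

lemma EantiR1 (j : Fin 7) (h : (0 : Fin 7) ≠ j) :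
    e (1 : Fin 8) * e j.succ + e j.succ * e (1 : Fin 8) = 0 := by
  match j with
  | 0 => exact absurd rfl h
  | 1 => exact anti12
  | 2 => exact anti13
  | 3 => exact anti14
  | 4 => exact anti15
  | 5 => exact anti16
  | 6 => exact anti17

lemma EantiR2 (j : Fin 7) (h : (1 : Fin 7) ≠ j) :
    e (2 : Fin 8) * e j.succ + e j.succ * e (2 : Fin 8) = 0 := by
  match j with
  | 0 => exact (add_comm (e 1 * e 2) (e 2 * e 1)) ▸ anti12
  | 1 => exact absurd rfl h
  | 2 => exact anti23
  | 3 => exact anti24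
  | 4 => exact anti25
  | 5 => exact anti26
  | 6 => exact anti27

lemma EantiR3 (j : Fin 7) (h : (2 : Fin 7) ≠ j) :
    e (3 : Fin 8) * e j.succ + e j.succ * e (3 : Fin 8) = 0 := by
  match j with
  | 0 => exact (add_comm (e 1 * e 3) (e 3 * e 1)) ▸ anti13
  | 1 => exact (add_comm (e 2 * e 3) (e 3 * e 2)) ▸ anti23
  | 2 => exact absurd rfl h
  | 3 => exact anti34
  | 4 => exact anti35
  | 5 => exact anti36
  | 6 => exact anti37

lemma EantiR4 (j : Fin 7) (h : (3 : Fin 7) ≠ j) :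
    e (4 : Fin 8) * e j.succ + e j.succ * e (4 : Fin 8) = 0 := by
  match j with
  | 0 => exact (add_comm (e 1 * e 4) (e 4 * e 1)) ▸ anti14
  | 1 => exact (add_comm (e 2 * e 4) (e 4 * e 2)) ▸ anti24
  | 2 => exact (add_comm (e 3 * e 4) (e 4 * e 3)) ▸ anti34
  | 3 => exact absurd rfl h
  | 4 => exact anti45
  | 5 => exact anti46
  | 6 => exact anti47

lemma EantiR5 (j : Fin 7) (h : (4 : Fin 7) ≠ j) :
    e (5 : Fin 8) * e j.succ + e j.succ * e (5 : Fin 8) = 0 := by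
  match j with
  | 0 => exact (add_comm (e 1 * e 5) (e 5 * e 1)) ▸ anti15
  | 1 => exact (add_comm (e 2 * e 5) (e 5 * e 2)) ▸ anti25
  | 2 => exact (add_comm (e 3 * e 5) (e 5 * e 3)) ▸ anti35
  | 3 => exact (add_comm (e 4 * e 5) (e 5 * e 4)) ▸ anti45
  | 4 => exact absurd rfl h
  | 5 => exact anti56
  | 6 => exact anti57

lemma EantiR6 (j : Fin 7) (h : (5 : Fin 7) ≠ j) :
    e (6 : Fin 8) * e j.succ + e j.succ * e (6 : Fin 8) = 0 := by
  match j with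
  | 0 => exact (add_comm (e 1 * e 6) (e 6 * e 1)) ▸ anti16
  | 1 => exact (add_comm (e 2 * e 6) (e 6 * e 2)) ▸ anti26
  | 2 => exact (add_comm (e 3 * e 6) (e 6 * e 3)) ▸ anti36
  | 3 => exact (add_comm (e 4 * e 6) (e 6 * e 4)) ▸ anti46
  | 4 => exact (add_comm (e 5 * e 6) (e 6 * e 5)) ▸ anti56
  | 5 => exact absurd rfl h
  | 6 => exact anti67

lemma EantiR7 (j : Fin 7) (h : (6 : Fin 7) ≠ j) :
    e (7 : Fin 8) * e j.succ + e j.succ * e (7 : Fin 8) = 0 := by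
  match j with
  | 0 => exact (add_comm (e 1 * e 7) (e 7 * e 1)) ▸ anti17
  | 1 => exact (add_comm (e 2 * e 7) (e 7 * e 2)) ▸ anti27
  | 2 => exact (add_comm (e 3 * e 7) (e 7 * e 3)) ▸ anti37
  | 3 => exact (add_comm (e 4 * e 7) (e 7 * e 4)) ▸ anti47
  | 4 => exact (add_comm (e 5 * e 7) (e 7 * e 5)) ▸ anti57
  | 5 => exact (add_comm (e 6 * e 7) (e 7 * e 6)) ▸ anti67
  | 6 => exact absurd rfl h

lemma Eanti (i j : Fin 7) (h : i ≠ j) :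
    e i.succ * e j.succ + e j.succ * e i.succ = 0 := by
  match i with
  | 0 => exact EantiR1 j h
  | 1 => exact EantiR2 j h
  | 2 => exact EantiR3 j h
  | 3 => exact EantiR4 j h
  | 4 => exact EantiR5 j h
  | 5 => exact EantiR6 j h
  | 6 => exact EantiR7 j h

section ModuleFacts

variable {M : Type*} [AddCommGroup M] [Module ℝ M]
variable (L : Octonion →ₗ[ℝ] M →ₗ[ℝ] M)

/-- iterated action of imaginary units along a list -/
def prodL : List (Fin 7) → M → M
  | [], x => x
  | i :: l, x => L (e i.succ) (prodL l x)

variable (hone : ∀ m : M, L 1 m = m)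
variable (halt : ∀ (a : Octonion) (m : M), L (a * a) m = L a (L a m))

include halt in
lemma polarL (a b : Octonion) (x : M) :
    L (a * b + b * a) x = L a (L b x) + L b (L a x) := by
  have e1 : (a + b) * (a + b) = a * a + (a * b + b * a) + b * b := by
    rw [octo_add_mul, octo_mul_add, octo_mul_add]; abel
  have h2 : L (a * b + b * a) x
      = L ((a + b) * (a + b)) x - L (a * a) x - L (b * b) x := by
    rw [e1]; simp only [map_add, LinearMap.add_apply]; abel
  rw [h2, halt, halt, halt]
  simp only [map_add, LinearMap.add_apply]
  abel

include hone halt in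
lemma sqL (i : Fin 7) (x : M) : L (e i.succ) (L (e i.succ) x) = -x := by
  rw [← halt, Esq]
  have : L (-1 : Octonion) = -(L 1) := by rw [map_neg]
  rw [this, LinearMap.neg_apply, hone]

include halt in
lemma antiL (i j : Fin 7) (h : i ≠ j) (x : M) :
    L (e i.succ) (L (e j.succ) x) = - L (e j.succ) (L (e i.succ) x) := by
  have hp := polarL L halt (e i.succ) (e j.succ) x
  rw [Eanti i j h, map_zero, LinearMap.zero_apply] at hp
  exact eq_neg_of_add_eq_zero_left hp.symm

include hone halt in
lemma key (m : M) : ∀ l : List (Fin 7), l.Pairwise (· < ·) → ∀ j : Fin 7,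
    ∃ l' : List (Fin 7), l'.Pairwise (· < ·) ∧ (∀ k ∈ l', k = j ∨ k ∈ l) ∧
      (L (e j.succ) (prodL L l m) = prodL L l' m ∨
       L (e j.succ) (prodL L l m) = - prodL L l' m) := by
  intro l
  induction l with
  | nil =>
      intro _ j
      exact ⟨[j], List.pairwise_singleton _ j, by simp, Or.inl rfl⟩
  | cons i l ih =>
      intro hs j
      rcases lt_trichotomy j i with hlt | heq | hgt
      · refine ⟨j :: i :: l, ?_, ?_, Or.inl rfl⟩
        · refine List.pairwise_cons.mpr ⟨?_, hs⟩
          intro b hb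
          rcases List.mem_cons.mp hb with rfl | hb
          · exact hlt
          · exact hlt.trans (List.rel_of_pairwise_cons hs hb)
        · intro k hk
          rcases List.mem_cons.mp hk with rfl | hk
          · exact Or.inl rfl
          · exact Or.inr hk
      · subst heq
        refine ⟨l, hs.of_cons, fun k hk => Or.inr (List.mem_cons_of_mem _ hk), Or.inr ?_⟩
        exact sqL L hone halt j (prodL L l m)
      · obtain ⟨l', hl's, hl'sub, hor⟩ := ih hs.of_cons j
        have hstep : L (e j.succ) (prodL L (i :: l) m)
            = - L (e i.succ) (L (e j.succ) (prodL L l m)) := by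
          show L (e j.succ) (L (e i.succ) (prodL L l m)) = _
          exact antiL L halt j i (ne_of_gt hgt) (prodL L l m)
        have hsorted : (i :: l').Pairwise (· < ·) := by
          refine List.pairwise_cons.mpr ⟨?_, hl's⟩
          intro b hb
          rcases hl'sub b hb with rfl | hb
          · exact hgt
          · exact List.rel_of_pairwise_cons hs hb
        have hsub : ∀ k ∈ i :: l', k = j ∨ k ∈ i :: l := by
          intro k hk
          rcases List.mem_cons.mp hk with rfl | hk
          · exact Or.inr (List.mem_cons_self)
          · rcases hl'sub k hk with rfl | hk
            · exact Or.inl rfl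
            · exact Or.inr (List.mem_cons_of_mem _ hk)
        rcases hor with h | h
        · refine ⟨i :: l', hsorted, hsub, Or.inr ?_⟩
          rw [hstep, h]
          rfl
        · refine ⟨i :: l', hsorted, hsub, Or.inl ?_⟩
          rw [hstep, h, map_neg, neg_neg]
          rfl

end ModuleFacts

lemma e0v' : e 0 = mk' 1 0 := rfl

lemma octo_eq_sum (a : Octonion) :
    a = (q1 a).re • e 0 + (q1 a).imI • e 1 + (q1 a).imJ • e 2 + (q1 a).imK • e 3 +
      (q2 a).re • e 4 + (q2 a).imI • e 5 + (q2 a).imJ • e 6 + (q2 a).imK • e 7 := by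
  rw [e0v', e1v, e2v, e3v, e4v, e5v, e6v, e7v]
  refine octo_ext ?_ ?_ <;>
    · simp only [q1_add, q2_add, q1_smul, q2_smul, q1_mk, q2_mk]
      ext <;> simp <;> norm_num

lemma octo_span_top (a : Octonion) : a ∈ Submodule.span ℝ (Set.range e) := by
  have he : ∀ i : Fin 8, e i ∈ Submodule.span ℝ (Set.range e) := fun i =>
    Submodule.subset_span ⟨i, rfl⟩
  rw [octo_eq_sum a]
  exact add_mem (add_mem (add_mem (add_mem (add_mem (add_mem (add_mem
    (Submodule.smul_mem _ _ (he 0)) (Submodule.smul_mem _ _ (he 1)))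
    (Submodule.smul_mem _ _ (he 2))) (Submodule.smul_mem _ _ (he 3)))
    (Submodule.smul_mem _ _ (he 4))) (Submodule.smul_mem _ _ (he 5)))
    (Submodule.smul_mem _ _ (he 6))) (Submodule.smul_mem _ _ (he 7))

end OctoAux


open Octonion in
/-- In a left `𝕆`-module `M` (with `ℝ`-bilinear action `L`, `L 1 = id`, and the
left alternative law `(a²)m = a(am)`), the submodule generated by a single
element `m` has real dimension at most `128`. -/
theorem octonion_left_module_cyclic_submodule_rank_le
    {M : Type*} [AddCommGroup M] [Module ℝ M]
    (L : Octonion →ₗ[ℝ] M →ₗ[ℝ] M)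
    (hone : ∀ m : M, L 1 m = m)
    (halt : ∀ (a : Octonion) (m : M), L (a * a) m = L a (L a m))
    (m : M) :
    Module.rank ℝ
      (sInf {S : Submodule ℝ M |
        m ∈ S ∧ ∀ (a : Octonion) (x : M), x ∈ S → L a x ∈ S} : Submodule ℝ M)
      ≤ 128 := by
  classical
  set f : Finset (Fin 7) → M := fun s => OctoAux.prodL L (s.sort (· ≤ ·)) m with hf
  set S : Submodule ℝ M := Submodule.span ℝ (Set.range f) with hS
  have hgen : ∀ l : List (Fin 7), l.Pairwise (· < ·) → OctoAux.prodL L l m ∈ S := by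
    intro l hl
    have hnd : l.Nodup := hl.nodup
    have : l.toFinset.sort (· ≤ ·) = l := (List.toFinset_sort _ hnd).mpr (hl.imp le_of_lt)
    refine Submodule.subset_span ⟨l.toFinset, ?_⟩
    simp only [hf, this]
  have hmem : m ∈ S := by
    have := hgen [] (List.Pairwise.nil)
    exact this
  have hclosed : ∀ (a : Octonion) (x : M), x ∈ S → L a x ∈ S := by
    have hbasis : ∀ x, x ∈ S → ∀ i : Fin 8, L (e i) x ∈ S := by
      intro x hx
      induction hx using Submodule.span_induction with
      | mem x hx =>
          obtain ⟨s, rfl⟩ := hx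
          intro i
          induction i using Fin.cases with
          | zero =>
              rw [show e 0 = (1 : Octonion) from rfl, hone]
              exact Submodule.subset_span ⟨s, rfl⟩
          | succ k =>
              obtain ⟨l', hl's, -, hor⟩ :=
                OctoAux.key L hone halt m (s.sort (· ≤ ·)) (List.sortedLT_iff_pairwise.mp s.sortedLT_sort) k
              rcases hor with h | h
              · rw [show f s = OctoAux.prodL L (s.sort (· ≤ ·)) m from rfl, h]
                exact hgen l' hl's
              · rw [show f s = OctoAux.prodL L (s.sort (· ≤ ·)) m from rfl, h]
                exact Submodule.neg_mem _ (hgen l' hl's)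
      | zero => intro i; rw [map_zero]; exact Submodule.zero_mem _
      | add x y hx hy ihx ihy =>
          intro i; rw [map_add]; exact Submodule.add_mem _ (ihx i) (ihy i)
      | smul c x hx ihx =>
          intro i; rw [map_smul]; exact Submodule.smul_mem _ _ (ihx i)
    intro a x hx
    have hT : Submodule.span ℝ (Set.range e) ≤ Submodule.comap (L.flip x) S := by
      rw [Submodule.span_le]
      rintro - ⟨i, rfl⟩
      exact hbasis x hx i
    exact hT (OctoAux.octo_span_top a)
  have hle : (sInf {S : Submodule ℝ M |
      m ∈ S ∧ ∀ (a : Octonion) (x : M), x ∈ S → L a x ∈ S}) ≤ S :=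
    sInf_le ⟨hmem, hclosed⟩
  refine le_trans (Submodule.rank_mono hle) ?_
  have himg : ((Finset.univ.image f : Finset M) : Set M) = Set.range f := by
    rw [Finset.coe_image, Finset.coe_univ, Set.image_univ]
  have hr := rank_span_finset_le (R := ℝ) (Finset.univ.image f)
  rw [himg] at hr
  refine le_trans hr ?_
  have hcard : (Finset.univ.image f).card ≤ 128 := by
    refine le_trans (Finset.card_image_le) ?_
    simp [Fintype.card_finset]
  exact_mod_cast hcard
end
end
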